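/- Let X ⊆ ℝ^n be a nonempty closed convex set, let w, x ∈ ℝ^n, and let φ < 0 and M > 0 be constants such that ‖x − P_X(w)‖^2 ≤ M and ⟨w − P_X(w), x − P_X(w)⟩ ≤ φ. Then for every natural number t with t > −M/(2φ), the point z = (t/(t+1))·w + (1/(t+1))·x satisfies dist(z, X) < ‖w − P_X(w)‖ whenever w ∉ X; more precisely, dist(z, X)^2 − dist(w, X)^2 ≤ (M + 2tφ)/(t+1)^2 < 0. -/

import Mathlib

open RealInnerProductSpace

set_option maxHeartbeats 1000000 in
/-- under the Blackwell approachability condition the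
time-averaging step strictly decreases the distance to `X` for `t` large. -/
theorem approachability_step_decrease
    (n : ℕ) (X : Set (EuclideanSpace ℝ (Fin n)))
    (hXne : X.Nonempty) (hXcl : IsClosed X) (hXconv : Convex ℝ X)
    (w x p : EuclideanSpace ℝ (Fin n))
    (hpX : p ∈ X) (hp_proj : ∀ y ∈ X, ‖w - p‖ ≤ ‖w - y‖)
    (φ M : ℝ) (hφ : φ < 0) (hM : 0 < M)
    (hx_bound : ‖x - p‖^2 ≤ M)
    (happ : ⟪w - p, x - p⟫ ≤ φ)
    (t : ℕ) (ht : (t : ℝ) > -M/(2*φ)) :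
    (w ∉ X → Metric.infDist (((t : ℝ)/(t+1)) • w + ((1 : ℝ)/(t+1)) • x) X
        < ‖w - p‖) ∧
    Metric.infDist (((t : ℝ)/(t+1)) • w + ((1 : ℝ)/(t+1)) • x) X ^ 2
        - Metric.infDist w X ^ 2 ≤ (M + 2*(t : ℝ)*φ)/((t : ℝ)+1)^2 ∧
    (M + 2*(t : ℝ)*φ)/((t : ℝ)+1)^2 < 0 := by
  have htn : (0:ℝ) ≤ (t:ℝ) := Nat.cast_nonneg t
  set s : ℝ := (t:ℝ) + 1 with hs
  have hs0 : (0:ℝ) < s := by positivity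
  have hs2 : (0:ℝ) < s^2 := by positivity
  set z := ((t:ℝ)/s) • w + ((1:ℝ)/s) • x with hzdef
  set D := ‖w - p‖ with hDdef
  clear_value z D
  have hD0 : 0 ≤ D := by rw [hDdef]; exact norm_nonneg _
  -- infDist w X = D
  have hDw : Metric.infDist w X = D := by
    apply le_antisymm
    · rw [hDdef]
      simpa [dist_eq_norm] using Metric.infDist_le_dist_of_mem hpX
    · by_contra h
      push_neg at h
      obtain ⟨y, hy, hlt⟩ := (Metric.infDist_lt_iff hXne).1 h
      rw [dist_eq_norm] at hlt
      exact absurd (hp_proj y hy) (not_le.mpr hlt)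
  -- z - p decomposition
  have hzp : z - p = ((t:ℝ)/s) • (w - p) + ((1:ℝ)/s) • (x - p) := by
    have hab : (t:ℝ)/s + 1/s = 1 := by field_simp; exact hs.symm
    calc z - p = ((t:ℝ)/s) • w + ((1:ℝ)/s) • x - ((t:ℝ)/s + 1/s) • p := by
          rw [hzdef, hab, one_smul]
      _ = _ := by rw [add_smul, smul_sub, smul_sub]; abel
  have ha : (0:ℝ) ≤ (t:ℝ)/s := by positivity
  have hb : (0:ℝ) ≤ (1:ℝ)/s := by positivity
  have hnorm : ‖z - p‖^2 = ((t:ℝ)/s)^2 * D^2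
      + 2*((t:ℝ)/s)*((1:ℝ)/s)*⟪w - p, x - p⟫ + ((1:ℝ)/s)^2 * ‖x - p‖^2 := by
    rw [hDdef, hzp, norm_add_sq_real, norm_smul, norm_smul, real_inner_smul_left,
      real_inner_smul_right, Real.norm_eq_abs, Real.norm_eq_abs,
      abs_of_nonneg ha, abs_of_nonneg hb]
    ring
  have hzle : ‖z - p‖^2 ≤ ((t:ℝ)^2 * D^2 + 2*(t:ℝ)*φ + M)/s^2 := by
    rw [hnorm]
    have h2 : 2*((t:ℝ)/s)*((1:ℝ)/s)*⟪w - p, x - p⟫ ≤ 2*((t:ℝ)/s)*((1:ℝ)/s)*φ := by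
      apply mul_le_mul_of_nonneg_left happ
      positivity
    have h3 : ((1:ℝ)/s)^2 * ‖x - p‖^2 ≤ ((1:ℝ)/s)^2 * M := by
      apply mul_le_mul_of_nonneg_left hx_bound
      positivity
    have heq : ((t:ℝ)/s)^2 * D^2 + 2*((t:ℝ)/s)*((1:ℝ)/s)*φ + ((1:ℝ)/s)^2 * M
        = ((t:ℝ)^2 * D^2 + 2*(t:ℝ)*φ + M)/s^2 := by
      field_simp
    calc ((t:ℝ)/s)^2 * D^2 + 2*((t:ℝ)/s)*((1:ℝ)/s)*⟪w - p, x - p⟫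
          + ((1:ℝ)/s)^2 * ‖x - p‖^2
        ≤ ((t:ℝ)/s)^2 * D^2 + 2*((t:ℝ)/s)*((1:ℝ)/s)*φ + ((1:ℝ)/s)^2 * M := by
          linarith
      _ = ((t:ℝ)^2 * D^2 + 2*(t:ℝ)*φ + M)/s^2 := heq
  -- infDist z ≤ ‖z - p‖
  have hzd : Metric.infDist z X ≤ ‖z - p‖ := by
    simpa [dist_eq_norm] using Metric.infDist_le_dist_of_mem (x := z) hpX
  have hzd2 : Metric.infDist z X ^ 2 ≤ ‖z - p‖^2 :=
    pow_le_pow_left₀ Metric.infDist_nonneg hzd 2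
  -- numeric: M + 2tφ < 0
  have h2φ : 2*φ < 0 := by linarith
  have hMt : M + 2*(t:ℝ)*φ < 0 := by
    have ht' : -M/(2*φ) < (t:ℝ) := ht
    rw [div_lt_iff_of_neg h2φ] at ht'
    nlinarith
  have hthird : (M + 2*(t:ℝ)*φ)/s^2 < 0 := div_neg_of_neg_of_pos hMt hs2
  -- key bound on the difference of squares
  have hkey : Metric.infDist z X ^ 2 - Metric.infDist w X ^ 2
      ≤ (M + 2*(t:ℝ)*φ)/s^2 := by
    rw [hDw]
    have hfrac : ((t:ℝ)^2 * D^2 + 2*(t:ℝ)*φ + M)/s^2 - D^2 ≤ (M + 2*(t:ℝ)*φ)/s^2 := by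
      have h1 : ((t:ℝ)^2*D^2 + 2*(t:ℝ)*φ + M)/s^2 - D^2 - (M + 2*(t:ℝ)*φ)/s^2
          = ((t:ℝ)^2 - s^2)*D^2/s^2 := by
        field_simp
        ring
      have hts : (t:ℝ)^2 - s^2 ≤ 0 := by rw [hs]; nlinarith
      have hnum : ((t:ℝ)^2 - s^2)*D^2 ≤ 0 := by
        nlinarith [mul_nonneg (neg_nonneg.mpr hts) (sq_nonneg D)]
      have h2 : ((t:ℝ)^2 - s^2)*D^2/s^2 ≤ 0 :=
        div_nonpos_iff.mpr (Or.inr ⟨hnum, hs2.le⟩)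
      linarith
    linarith
  refine ⟨?_, hkey, hthird⟩
  intro hwX
  have hwp : w ≠ p := fun h => hwX (h ▸ hpX)
  have hDpos : 0 < D := by
    rw [hDdef]
    exact norm_sub_pos_iff.mpr hwp
  have hlt2 : Metric.infDist z X ^ 2 < D^2 := by
    have h := hkey
    rw [hDw] at h
    linarith
  exact lt_of_pow_lt_pow_left₀ 2 hD0 hlt2
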